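/- For a nonnegative measurable function (or more simply, for a function g : R^n -> [0,infinity) satisfying the subadditivity condition g(x + x') <= g(x) + g(x') for all x, x'), the supremum of g over the unit ball B_1 is bounded by a dimensional constant times the integral over B_1 of g(x)/|x|^n dx. -/

import Mathlib

open MeasureTheory
open scoped NNReal ENNReal

theorem stmt_7 (n : ℕ) (hn : 0 < n) :
    ∃ C : ℝ≥0, 0 < C ∧
      ∀ g : EuclideanSpace ℝ (Fin n) → ℝ, Measurable g → (∀ x, 0 ≤ g x) →
        (∀ x x', g (x + x') ≤ g x + g x') →
        ∀ x ∈ Metric.ball (0 : EuclideanSpace ℝ (Fin n)) 1,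
          ENNReal.ofReal (g x) ≤
            (C : ℝ≥0∞) *
              ∫⁻ y in Metric.ball (0 : EuclideanSpace ℝ (Fin n)) 1,
                ENNReal.ofReal (g y / ‖y‖ ^ n) := by
  classical
  set E := EuclideanSpace ℝ (Fin n)
  haveI : Nonempty (Fin n) := ⟨⟨0, hn⟩⟩
  set μ : Measure E := volume with hμ
  have hv0 : 0 < μ (Metric.ball (0 : E) (1/4)) :=
    Metric.measure_ball_pos μ 0 (by norm_num)
  have hvt : μ (Metric.ball (0 : E) (1/4)) < ⊤ := measure_ball_lt_top
  set v : ℝ≥0∞ := μ (Metric.ball (0 : E) (1/4)) with hv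
  refine ⟨2 * v⁻¹.toNNReal, ?_, ?_⟩
  · have : 0 < v⁻¹.toNNReal :=
      ENNReal.toNNReal_pos (by simp [hvt.ne]) (by simp [hv0.ne'])
    positivity
  intro g hg hg0 hsub x hx
  set c : E := (2⁻¹ : ℝ) • x with hc
  have hrefl : ∀ y : E, x - y - c = -(y - c) := by
    intro y
    rw [hc]
    module
  set S : Set E := Metric.ball c (1/4) with hS
  have hSmeas : MeasurableSet S := measurableSet_ball
  have hSsub : S ⊆ Metric.ball (0 : E) 1 := by
    intro y hy
    have h1 : ‖y - c‖ < 1/4 := by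
      have := Metric.mem_ball.1 hy
      rw [dist_eq_norm] at this
      linarith
    have h2 : ‖c‖ < 1/2 := by
      have hx1 : ‖x‖ < 1 := by
        have := Metric.mem_ball.1 hx
        rwa [dist_zero_right] at this
      rw [hc, norm_smul]
      simp only [norm_inv, Real.norm_ofNat]
      linarith
    have h3 : ‖y‖ ≤ ‖y - c‖ + ‖c‖ := by
      have := norm_le_norm_add_norm_sub c y
      rw [norm_sub_rev] at this
      linarith
    rw [Metric.mem_ball, dist_zero_right]
    linarith
  have hμS : μ S = v := by rw [hS, hv, Measure.addHaar_ball_center]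
  have hmg : Measurable fun y : E => ENNReal.ofReal (g y) :=
    ENNReal.measurable_ofReal.comp hg
  -- step 1
  have step1 : ENNReal.ofReal (g x) * μ S ≤
      (∫⁻ y in S, ENNReal.ofReal (g y) ∂μ) +
        ∫⁻ y in S, ENNReal.ofReal (g (x - y)) ∂μ := by
    have h1 : ENNReal.ofReal (g x) * μ S = ∫⁻ _ in S, ENNReal.ofReal (g x) ∂μ := by
      rw [setLIntegral_const]
    rw [h1, ← lintegral_add_left hmg]
    refine setLIntegral_mono' hSmeas fun y _ => ?_
    have h2 := hsub y (x - y)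
    rw [add_sub_cancel] at h2
    calc ENNReal.ofReal (g x) ≤ ENNReal.ofReal (g y + g (x - y)) :=
          ENNReal.ofReal_le_ofReal h2
      _ = ENNReal.ofReal (g y) + ENNReal.ofReal (g (x - y)) :=
          ENNReal.ofReal_add (hg0 y) (hg0 (x - y))
  -- step 2: reflection
  have step2 : (∫⁻ y in S, ENNReal.ofReal (g (x - y)) ∂μ) =
      ∫⁻ y in S, ENNReal.ofReal (g y) ∂μ := by
    have hpre : (fun y : E => x - y) ⁻¹' S = S := by
      ext y
      simp only [Set.mem_preimage, hS, Metric.mem_ball, dist_eq_norm]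
      rw [hrefl y, norm_neg]
      exact Iff.of_eq (congrArg (· < (1/4:ℝ)) (dist_eq_norm y c).symm)
    have hmp : MeasurePreserving (fun y : E => x - y) μ μ :=
      Measure.measurePreserving_sub_left μ x
    have hemb : MeasurableEmbedding (fun y : E => x - y) :=
      (MeasurableEquiv.subLeft x).measurableEmbedding
    have h := hmp.setLIntegral_comp_preimage_emb hemb
      (fun y => ENNReal.ofReal (g y)) S
    rw [hpre] at h
    exact h
  -- step 3
  have step3 : (∫⁻ y in S, ENNReal.ofReal (g y) ∂μ) ≤
      ∫⁻ y in Metric.ball (0 : E) 1, ENNReal.ofReal (g y / ‖y‖ ^ n) ∂μ := by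
    calc (∫⁻ y in S, ENNReal.ofReal (g y) ∂μ)
        ≤ ∫⁻ y in S, ENNReal.ofReal (g y / ‖y‖ ^ n) ∂μ := by
          refine setLIntegral_mono_ae
            (ENNReal.measurable_ofReal.comp
              (hg.div (measurable_norm.pow_const n))).aemeasurable ?_
          filter_upwards [compl_mem_ae_iff.2 (measure_singleton (0 : E))] with y hy hyS
          have hy0 : y ≠ 0 := hy
          have hny : 0 < ‖y‖ := norm_pos_iff.2 hy0
          have hle1 : ‖y‖ ≤ 1 := by
            have := Metric.mem_ball.1 (hSsub hyS)
            rw [dist_zero_right] at this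
            linarith
          have hpow : 0 < ‖y‖ ^ n := pow_pos hny n
          have hpow1 : ‖y‖ ^ n ≤ 1 := pow_le_one₀ hny.le hle1
          refine ENNReal.ofReal_le_ofReal ?_
          rw [le_div_iff₀ hpow]
          nlinarith [hg0 y]
      _ ≤ _ := lintegral_mono_set hSsub
  set I : ℝ≥0∞ := ∫⁻ y in Metric.ball (0 : E) 1, ENNReal.ofReal (g y / ‖y‖ ^ n) ∂μ with hI
  have key : ENNReal.ofReal (g x) * v ≤ 2 * I := by
    rw [← hμS]
    calc ENNReal.ofReal (g x) * μ S ≤ _ := step1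
      _ = 2 * ∫⁻ y in S, ENNReal.ofReal (g y) ∂μ := by rw [step2, two_mul]
      _ ≤ 2 * I := mul_le_mul_right step3 2
  have hC : ((2 * v⁻¹.toNNReal : ℝ≥0) : ℝ≥0∞) = 2 * v⁻¹ := by
    push_cast
    rw [ENNReal.coe_toNNReal]
    exact ENNReal.inv_ne_top.2 hv0.ne'
  rw [hC]
  calc ENNReal.ofReal (g x) = ENNReal.ofReal (g x) * v * v⁻¹ := by
        rw [mul_assoc, ENNReal.mul_inv_cancel hv0.ne' hvt.ne, mul_one]
    _ ≤ 2 * I * v⁻¹ := mul_le_mul_left key _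
    _ = 2 * v⁻¹ * I := by ring
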